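/- For the two-site model, the following Lie derivative identities hold at every point of X₊ and for i = 1, 2: L_{g_i} h_e = 0, L_{g_i} L_f h_e = 0, L_{g_i} L_f² h_e = 0, L_{g_i} L_f³ h_e = 0, and L_{g_i} h_h = 0, L_{g_i} L_f h_h = 0, L_{g_i} L_f² h_h = 0. (These identities are the first part of the claim in Lemma 2 that the model has vector relative degree {5, 4} with respect to the outputs (h_e, h_h).) -/
import Mathlib


noncomputable section

/-- Parameters of the two-site electricity and heat supply model, together
with the sign conditions assumed in the paper. -/
structure Params where
  (Tv1 Tf1 TCD1 Tv2 Tf2 TCD2 : ℝ)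
  (Te1 Te2 D1 D2 : ℝ)
  (Ke1 Ke2 Kh1 Kh2 : ℝ)
  (Th1 Th2 Th3 : ℝ)
  (rhos lam len dia hc : ℝ)
  (E1 E2 Einf : ℝ)
  (B10 B20 B12 : ℝ)
  (G10 G20 G12 : ℝ)
  (beta1 beta2 : ℝ)
  (Wo1 Wo2 : ℝ)
  (QL1 QL2 : ℝ)
  hTv1 : 0 < Tv1
  hTf1 : 0 < Tf1
  hTCD1 : 0 < TCD1
  hTv2 : 0 < Tv2
  hTf2 : 0 < Tf2
  hTCD2 : 0 < TCD2
  hTe1 : 0 < Te1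
  hTe2 : 0 < Te2
  hD1 : 0 < D1
  hD2 : 0 < D2
  hKe1 : 0 < Ke1
  hKe2 : 0 < Ke2
  hKh1 : 0 < Kh1
  hKh2 : 0 < Kh2
  hTh1 : 0 < Th1
  hTh2 : 0 < Th2
  hTh3 : 0 < Th3
  hrhos : 0 < rhos
  hlam : 0 < lam
  hlen : 0 < len
  hdia : 0 < dia
  hhc : 0 < hc
  hE1 : 0 < E1
  hE2 : 0 < E2
  hEinf : 0 < Einf
  hB10 : 0 < B10
  hB20 : 0 < B20
  hB12 : 0 < B12
  hG10 : 0 ≤ G10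
  hG20 : 0 ≤ G20
  hG12 : 0 ≤ G12
  hbeta1 : 0 ≤ beta1
  hbeta2 : 0 ≤ beta2
  hWo1 : Wo1 ∈ Set.Ioo (0 : ℝ) 1
  hWo2 : Wo2 ∈ Set.Ioo (0 : ℝ) 1

/-- The state space of the two-site model: `x = (x_g1,…,x_g6, x_e1,…,x_e4,
x_h1, x_h2, x_h3) ∈ ℝ¹³`.  Index convention: `x i` for `i = 0,…,5` are the gas
turbine variables `x_g1,…,x_g6`; `x 6, x 7, x 8, x 9` are `x_e1, x_e2, x_e3,
x_e4`; `x 10, x 11, x 12` are `x_h1, x_h2, x_h3`. -/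
abbrev St : Type := Fin 13 → ℝ

namespace Params

variable (p : Params)

/-- `c = (π/4)·h_c·ρ_s`. -/
def cc : ℝ := (Real.pi / 4) * p.hc * p.rhos

/-- Mechanical power of turbine 1. -/
def Pm1 (x : St) : ℝ := p.Ke1 * (x 2 - p.Wo1) / (1 - p.Wo1)

/-- Mechanical power of turbine 2. -/
def Pm2 (x : St) : ℝ := p.Ke2 * (x 5 - p.Wo2) / (1 - p.Wo2)

/-- Electric output power of generator 1. -/
def Pe1 (x : St) : ℝ :=
  p.E1 * p.Einf * (p.G10 * Real.cos (x 6) + p.B10 * Real.sin (x 6))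
    + p.E1 * p.E2 * (p.G12 * Real.cos (x 6 - x 8) + p.B12 * Real.sin (x 6 - x 8))

/-- Electric output power of generator 2. -/
def Pe2 (x : St) : ℝ :=
  p.E2 * p.Einf * (p.G20 * Real.cos (x 8) + p.B20 * Real.sin (x 8))
    + p.E2 * p.E1 * (p.G12 * Real.cos (x 8 - x 6) + p.B12 * Real.sin (x 8 - x 6))

/-- Heat output of recovery boiler 1. -/
def Qa1 (x : St) : ℝ := p.Kh1 * (x 1 + p.beta1) / (1 + p.beta1)

/-- Heat output of recovery boiler 2. -/
def Qa2 (x : St) : ℝ := p.Kh2 * (x 4 + p.beta2) / (1 + p.beta2)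

/-- The drift vector field `f` of the two-site model. -/
def drift (x : St) : St :=
  ![ (-x 0 + p.Wo1) / p.Tv1,
     (-x 1 + x 0) / p.Tf1,
     (-x 2 + x 1) / p.TCD1,
     (-x 3 + p.Wo2) / p.Tv2,
     (-x 4 + x 3) / p.Tf2,
     (-x 5 + x 4) / p.TCD2,
     x 7 / p.Te1,
     (p.Pm1 x - p.D1 * x 7 - p.Pe1 x) / p.Te1,
     x 9 / p.Te2,
     (p.Pm2 x - p.D2 * x 9 - p.Pe2 x) / p.Te2,
     (p.Qa1 x - p.QL1 - p.cc * x 11) / p.Th1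
       - (p.Qa2 x - p.QL2 + p.cc * x 11) / p.Th2,
     (x 10 / p.rhos - (p.lam * p.len / (2 * p.dia)) * x 11 * |x 11|) / p.Th3,
     p.Qa1 x - p.QL1 + p.Qa2 x - p.QL2 ]

/-- The input vector field `g_1`. -/
def g1 : St → St := fun _ => Pi.single 0 ((1 - p.Wo1) / p.Tv1)

/-- The input vector field `g_2`. -/
def g2 : St → St := fun _ => Pi.single 3 ((1 - p.Wo2) / p.Tv2)

/-- The output `h_e`: electric power to the infinite bus. -/
def hE (x : St) : ℝ :=
  p.E1 * p.Einf * (p.B10 * Real.sin (x 6) - p.G10 * Real.cos (x 6))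
    + p.E2 * p.Einf * (p.B20 * Real.sin (x 8) - p.G20 * Real.cos (x 8))

/-- The output `h_h`: heat flow rate through the pipe. -/
def hH (x : St) : ℝ := p.cc * x 11

end Params

/-- Lie derivative `L_v h (x) = Dh(x)·v(x)` of a function along a vector
field. -/
def lie (v : St → St) (h : St → ℝ) (x : St) : ℝ := fderiv ℝ h x (v x)

/-- Iterated Lie derivative `L_v^k h`. -/
def lieIt (v : St → St) : ℕ → (St → ℝ) → (St → ℝ)
  | 0, h => h
  | n + 1, h => lie v (lieIt v n h)

/-- The open set `X₊ = { x : x_h2 > 0 }` on which the drift is smooth. -/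
def Xplus : Set St := { x : St | 0 < x 11 }


def LocalOn (S : Set (Fin 13)) (h : St → ℝ) : Prop :=
  ∀ y z : St, (∀ i ∈ S, y i = z i) → h y = h z

section
open Classical

def projCL (S : Set (Fin 13)) : St →L[ℝ] St :=
  LinearMap.toContinuousLinearMap
  { toFun := fun y => fun i => if i ∈ S then y i else 0
    map_add' := by intro a b; funext i; by_cases h : i ∈ S <;> simp [h]
    map_smul' := by intro c a; funext i; by_cases h : i ∈ S <;> simp [h] }

lemma projCL_apply (S : Set (Fin 13)) (y : St) (i : Fin 13) :
    projCL S y i = if i ∈ S then y i else 0 := rfl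

end

lemma comp_projCL {S : Set (Fin 13)} {h : St → ℝ}
    (hh : LocalOn S h) (y : St) : h (projCL S y) = h y := by
  apply hh; intro i hi; simp [projCL_apply, hi]

lemma diff_iff_proj {S : Set (Fin 13)} {h : St → ℝ}
    (hh : LocalOn S h) (y : St) :
    DifferentiableAt ℝ h y ↔ DifferentiableAt ℝ h (projCL S y) := by
  have key : ∀ a : St, (∀ i ∈ S, a i = 0) → ∀ u : St, h (u + a) = h u := by
    intro a ha u; apply hh; intro i hi; simp [ha i hi]
  constructor
  · intro hd
    have heq : (fun u : St => h (u + (y - projCL S y))) = h := by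
      funext u; apply key; intro i hi; simp [projCL_apply, hi]
    have : DifferentiableAt ℝ (fun u : St => h (u + (y - projCL S y))) (projCL S y) := by
      have hT : DifferentiableAt ℝ (fun u : St => u + (y - projCL S y)) (projCL S y) :=
        (differentiable_id.add_const _) _
      have hd2 : DifferentiableAt ℝ h ((fun u : St => u + (y - projCL S y)) (projCL S y)) := by
        show DifferentiableAt ℝ h (projCL S y + (y - projCL S y))
        have he : projCL S y + (y - projCL S y) = y := by abel
        rwa [he]
      exact DifferentiableAt.comp _ hd2 hT
    rwa [heq] at this
  · intro hd
    have heq : (fun u : St => h (u + (projCL S y - y))) = h := by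
      funext u; apply key; intro i hi; simp [projCL_apply, hi]
    have : DifferentiableAt ℝ (fun u : St => h (u + (projCL S y - y))) y := by
      have hT : DifferentiableAt ℝ (fun u : St => u + (projCL S y - y)) y :=
        (differentiable_id.add_const _) _
      have hd2 : DifferentiableAt ℝ h ((fun u : St => u + (projCL S y - y)) y) := by
        show DifferentiableAt ℝ h (y + (projCL S y - y))
        have he : y + (projCL S y - y) = projCL S y := by abel
        rwa [he]
      exact DifferentiableAt.comp _ hd2 hT
    rwa [heq] at this

lemma fderiv_localOn {S : Set (Fin 13)} {h : St → ℝ}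
    (hh : LocalOn S h) (y z : St) (hyz : ∀ i ∈ S, y i = z i)
    (v w : St) (hvw : ∀ i ∈ S, v i = w i) :
    fderiv ℝ h y v = fderiv ℝ h z w := by
  have hproj : ∀ u x : St, fderiv ℝ h u x = fderiv ℝ h (projCL S u) (projCL S x) := by
    intro u x
    by_cases hd : DifferentiableAt ℝ h (projCL S u)
    · have hcomp : h = h ∘ (projCL S) := by funext a; exact (comp_projCL hh a).symm
      conv_lhs => rw [hcomp]
      rw [fderiv_comp u hd ((projCL S).differentiableAt)]
      simp [ContinuousLinearMap.fderiv]
    · have hd' : ¬ DifferentiableAt ℝ h u := fun h' => hd (((diff_iff_proj hh u).mp h'))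
      rw [fderiv_zero_of_not_differentiableAt hd, fderiv_zero_of_not_differentiableAt hd']
      simp
  rw [hproj y v, hproj z w]
  have h1 : projCL S y = projCL S z := by
    funext i; by_cases hi : i ∈ S <;> simp [projCL_apply, hi]; exact hyz i hi
  have h2 : projCL S v = projCL S w := by
    funext i; by_cases hi : i ∈ S <;> simp [projCL_apply, hi]; exact hvw i hi
  rw [h1, h2]

lemma fderiv_single_zero {S : Set (Fin 13)} {h : St → ℝ}
    (hh : LocalOn S h) {j : Fin 13} (hj : j ∉ S) (c : ℝ) (x : St) :
    fderiv ℝ h x (Pi.single j c) = 0 := by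
  have := fderiv_localOn hh x x (fun _ _ => rfl) (Pi.single j c) 0
    (fun i hi => by
      have hne : i ≠ j := fun e => hj (e ▸ hi)
      simp [Pi.single_eq_of_ne hne])
  simpa using this

lemma lie_localOn_step (p : Params) {S S' : Set (Fin 13)} {h : St → ℝ}
    (hh : LocalOn S h) (hSS' : S ⊆ S')
    (hdrift : ∀ y z : St, (∀ i ∈ S', y i = z i) → ∀ i ∈ S, p.drift y i = p.drift z i) :
    LocalOn S' (lie p.drift h) := by
  intro y z hyz
  exact fderiv_localOn hh y z (fun i hi => hyz i (hSS' hi)) _ _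
    (fun i hi => hdrift y z hyz i hi)

lemma lie_g1_eq (p : Params) (h : St → ℝ) (x : St) :
    lie p.g1 h x = fderiv ℝ h x (Pi.single 0 ((1 - p.Wo1) / p.Tv1)) := rfl

lemma lie_g2_eq (p : Params) (h : St → ℝ) (x : St) :
    lie p.g2 h x = fderiv ℝ h x (Pi.single 3 ((1 - p.Wo2) / p.Tv2)) := rfl

namespace Params
variable (p : Params)

lemma d1 (y : St) : p.drift y 1 = (-y 1 + y 0) / p.Tf1 := rfl
lemma d2 (y : St) : p.drift y 2 = (-y 2 + y 1) / p.TCD1 := rfl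
lemma d4 (y : St) : p.drift y 4 = (-y 4 + y 3) / p.Tf2 := rfl
lemma d5 (y : St) : p.drift y 5 = (-y 5 + y 4) / p.TCD2 := rfl
lemma d6 (y : St) : p.drift y 6 = y 7 / p.Te1 := rfl
lemma d7 (y : St) : p.drift y 7 = (p.Pm1 y - p.D1 * y 7 - p.Pe1 y) / p.Te1 := rfl
lemma d8 (y : St) : p.drift y 8 = y 9 / p.Te2 := rfl
lemma d9 (y : St) : p.drift y 9 = (p.Pm2 y - p.D2 * y 9 - p.Pe2 y) / p.Te2 := rfl
lemma d10 (y : St) : p.drift y 10 =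
    (p.Qa1 y - p.QL1 - p.cc * y 11) / p.Th1 - (p.Qa2 y - p.QL2 + p.cc * y 11) / p.Th2 := rfl
lemma d11 (y : St) : p.drift y 11 =
    (y 10 / p.rhos - (p.lam * p.len / (2 * p.dia)) * y 11 * |y 11|) / p.Th3 := rfl

end Params

def SE0 : Set (Fin 13) := {6, 8}
def SE1 : Set (Fin 13) := {6, 7, 8, 9}
def SE2 : Set (Fin 13) := {2, 5, 6, 7, 8, 9}
def SE3 : Set (Fin 13) := {1, 2, 4, 5, 6, 7, 8, 9}
def SH0 : Set (Fin 13) := {11}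
def SH1 : Set (Fin 13) := {10, 11}
def SH2 : Set (Fin 13) := {1, 4, 10, 11}

lemma localOn_hE (p : Params) : LocalOn SE0 p.hE := by
  intro y z h
  have h6 := h 6 (by simp [SE0])
  have h8 := h 8 (by simp [SE0])
  simp [Params.hE, h6, h8]

lemma localOn_hE1 (p : Params) : LocalOn SE1 (lieIt p.drift 1 p.hE) := by
  refine lie_localOn_step p (localOn_hE p) ?_ ?_
  · intro i hi; simp only [SE0, SE1, Set.mem_insert_iff, Set.mem_singleton_iff] at hi ⊢; tauto
  · intro y z hyz i hi
    have h7 := hyz 7 (by simp [SE1])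
    have h9 := hyz 9 (by simp [SE1])
    simp only [SE0, Set.mem_insert_iff, Set.mem_singleton_iff] at hi
    rcases hi with rfl | rfl
    · rw [p.d6, p.d6, h7]
    · rw [p.d8, p.d8, h9]

lemma localOn_hE2 (p : Params) : LocalOn SE2 (lieIt p.drift 2 p.hE) := by
  refine lie_localOn_step p (localOn_hE1 p) ?_ ?_
  · intro i hi; simp only [SE1, SE2, Set.mem_insert_iff, Set.mem_singleton_iff] at hi ⊢; tauto
  · intro y z hyz i hi
    have h2 := hyz 2 (by simp [SE2])
    have h5 := hyz 5 (by simp [SE2])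
    have h6 := hyz 6 (by simp [SE2])
    have h7 := hyz 7 (by simp [SE2])
    have h8 := hyz 8 (by simp [SE2])
    have h9 := hyz 9 (by simp [SE2])
    simp only [SE1, Set.mem_insert_iff, Set.mem_singleton_iff] at hi
    rcases hi with rfl | rfl | rfl | rfl
    · rw [p.d6, p.d6, h7]
    · simp only [Params.d7, Params.Pm1, Params.Pe1]; rw [h2, h6, h7, h8]
    · rw [p.d8, p.d8, h9]
    · simp only [Params.d9, Params.Pm2, Params.Pe2]; rw [h5, h6, h8, h9]

lemma localOn_hE3 (p : Params) : LocalOn SE3 (lieIt p.drift 3 p.hE) := by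
  refine lie_localOn_step p (localOn_hE2 p) ?_ ?_
  · intro i hi; simp only [SE2, SE3, Set.mem_insert_iff, Set.mem_singleton_iff] at hi ⊢; tauto
  · intro y z hyz i hi
    have h1 := hyz 1 (by simp [SE3])
    have h2 := hyz 2 (by simp [SE3])
    have h4 := hyz 4 (by simp [SE3])
    have h5 := hyz 5 (by simp [SE3])
    have h6 := hyz 6 (by simp [SE3])
    have h7 := hyz 7 (by simp [SE3])
    have h8 := hyz 8 (by simp [SE3])
    have h9 := hyz 9 (by simp [SE3])
    simp only [SE2, Set.mem_insert_iff, Set.mem_singleton_iff] at hi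
    rcases hi with rfl | rfl | rfl | rfl | rfl | rfl
    · rw [p.d2, p.d2, h1, h2]
    · rw [p.d5, p.d5, h4, h5]
    · rw [p.d6, p.d6, h7]
    · simp only [Params.d7, Params.Pm1, Params.Pe1]; rw [h2, h6, h7, h8]
    · rw [p.d8, p.d8, h9]
    · simp only [Params.d9, Params.Pm2, Params.Pe2]; rw [h5, h6, h8, h9]

lemma localOn_hH (p : Params) : LocalOn SH0 p.hH := by
  intro y z h
  have h11 := h 11 (by simp [SH0])
  simp [Params.hH, h11]

lemma localOn_hH1 (p : Params) : LocalOn SH1 (lieIt p.drift 1 p.hH) := by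
  refine lie_localOn_step p (localOn_hH p) ?_ ?_
  · intro i hi; simp only [SH0, SH1, Set.mem_insert_iff, Set.mem_singleton_iff] at hi ⊢; tauto
  · intro y z hyz i hi
    have h10 := hyz 10 (by simp [SH1])
    have h11 := hyz 11 (by simp [SH1])
    simp only [SH0, Set.mem_singleton_iff] at hi
    subst hi
    rw [p.d11, p.d11, h10, h11]

lemma localOn_hH2 (p : Params) : LocalOn SH2 (lieIt p.drift 2 p.hH) := by
  refine lie_localOn_step p (localOn_hH1 p) ?_ ?_
  · intro i hi; simp only [SH1, SH2, Set.mem_insert_iff, Set.mem_singleton_iff] at hi ⊢; tauto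
  · intro y z hyz i hi
    have h1 := hyz 1 (by simp [SH2])
    have h4 := hyz 4 (by simp [SH2])
    have h10 := hyz 10 (by simp [SH2])
    have h11 := hyz 11 (by simp [SH2])
    simp only [SH1, Set.mem_insert_iff, Set.mem_singleton_iff] at hi
    rcases hi with rfl | rfl
    · simp only [Params.d10, Params.Qa1, Params.Qa2]; rw [h1, h4, h11]
    · rw [p.d11, p.d11, h10, h11]

/-- first part of Lemma 2 of the paper. For the two-site
model, at every point of `X₊` and for `i = 1, 2`:
`L_{g_i} L_f^k h_e = 0` for `k = 0,…,3` and `L_{g_i} L_f^k h_h = 0` for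
`k = 0,…,2`. -/
theorem two_site_relative_degree_lie_identities (p : Params) :
    ∀ x ∈ Xplus,
      (∀ k ≤ 3, lie p.g1 (lieIt p.drift k p.hE) x = 0 ∧
                lie p.g2 (lieIt p.drift k p.hE) x = 0) ∧
      (∀ k ≤ 2, lie p.g1 (lieIt p.drift k p.hH) x = 0 ∧
                lie p.g2 (lieIt p.drift k p.hH) x = 0) := by
  intro x _
  constructor
  · intro k hk
    interval_cases k
    · exact ⟨fderiv_single_zero (localOn_hE p) (by simp [SE0]) _ x,
             fderiv_single_zero (localOn_hE p) (by simp [SE0]) _ x⟩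
    · exact ⟨fderiv_single_zero (localOn_hE1 p) (by simp [SE1]) _ x,
             fderiv_single_zero (localOn_hE1 p) (by simp [SE1]) _ x⟩
    · exact ⟨fderiv_single_zero (localOn_hE2 p) (by simp [SE2]) _ x,
             fderiv_single_zero (localOn_hE2 p) (by simp [SE2]) _ x⟩
    · exact ⟨fderiv_single_zero (localOn_hE3 p) (by simp [SE3]) _ x,
             fderiv_single_zero (localOn_hE3 p) (by simp [SE3]) _ x⟩
  · intro k hk
    interval_cases k
    · exact ⟨fderiv_single_zero (localOn_hH p) (by simp [SH0]) _ x,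
             fderiv_single_zero (localOn_hH p) (by simp [SH0]) _ x⟩
    · exact ⟨fderiv_single_zero (localOn_hH1 p) (by simp [SH1]) _ x,
             fderiv_single_zero (localOn_hH1 p) (by simp [SH1]) _ x⟩
    · exact ⟨fderiv_single_zero (localOn_hH2 p) (by simp [SH2]) _ x,
             fderiv_single_zero (localOn_hH2 p) (by simp [SH2]) _ x⟩
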